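/- Let F be an algebraically closed field of characteristic different from 2 and λ ∈ F with λ ≠ ±1. Let A be the 2k×2k tridiagonal matrix with zero diagonal, all superdiagonal entries equal to 1, and all subdiagonal entries equal to λ. Then the pair (Aᵀ, A) is equivalent to (J_k(λ), I_k) ⊕ (I_k, J_k(λ)). -/

import Mathlib

open Matrix

/-- Equivalence of pairs of square matrices. -/
def PairEquiv {F : Type*} [Field F] {n : ℕ} (A B A' B' : Matrix (Fin n) (Fin n) F) : Prop :=
  ∃ R S : Matrix (Fin n) (Fin n) F, IsUnit R ∧ IsUnit S ∧ R * A * S = A' ∧ R * B * S = B'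

namespace Stmt10

variable {F : Type*} [Field F] {k : ℕ}

/-- superdiagonal shift -/
def Nm (F : Type*) [Field F] (k : ℕ) : Matrix (Fin k) (Fin k) F :=
  of fun i j => if (j : ℕ) = (i : ℕ) + 1 then 1 else 0

/-- inverse of 1 + lam • N -/
def Wm (F : Type*) [Field F] (k : ℕ) (lam : F) : Matrix (Fin k) (Fin k) F :=
  of fun i j => if (i : ℕ) ≤ (j : ℕ) then (-lam) ^ ((j : ℕ) - (i : ℕ)) else 0

def Mlam (F : Type*) [Field F] (k : ℕ) (lam : F) : Matrix (Fin k) (Fin k) F :=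
  (1 - lam ^ 2) • (Nm F k * Wm F k lam)

def Qm (F : Type*) [Field F] (k : ℕ) (hk : 0 < k) (lam : F) : Matrix (Fin k) (Fin k) F :=
  of fun i j => ((Mlam F k lam) ^ (k - 1 - (j : ℕ))) i ⟨k - 1, by omega⟩


lemma N_mul (Z : Matrix (Fin k) (Fin k) F) :
    Nm F k * Z = of fun (i j : Fin k) => if h : (i : ℕ) + 1 < k then Z ⟨(i : ℕ) + 1, h⟩ j else 0 := by
  ext i j
  simp only [Matrix.mul_apply, Nm, of_apply]
  split_ifs with h
  · rw [Finset.sum_eq_single (⟨(i:ℕ)+1, h⟩ : Fin k)]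
    · simp
    · intro b _ hb
      rw [if_neg, zero_mul]
      intro hc; exact hb (Fin.ext hc)
    · simp
  · apply Finset.sum_eq_zero
    intro b _
    rw [if_neg, zero_mul]
    intro hc; exact h (hc ▸ b.isLt)

lemma mul_N (Z : Matrix (Fin k) (Fin k) F) :
    Z * Nm F k = of fun (i j : Fin k) => if h : 0 < (j : ℕ) then Z i ⟨(j : ℕ) - 1, by omega⟩ else 0 := by
  ext i j
  simp only [Matrix.mul_apply, Nm, of_apply]
  split_ifs with h
  · rw [Finset.sum_eq_single (⟨(j:ℕ)-1, by omega⟩ : Fin k)]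
    · rw [if_pos (by simp; omega), mul_one]
    · intro b _ hb
      rw [if_neg, mul_zero]
      intro hc; exact hb (Fin.ext (by simp; omega))
    · simp
  · apply Finset.sum_eq_zero
    intro b _
    rw [if_neg, mul_zero]
    omega

lemma Npow_mul (m : ℕ) (Z : Matrix (Fin k) (Fin k) F) :
    (Nm F k) ^ m * Z = of fun (i j : Fin k) => if h : (i : ℕ) + m < k then Z ⟨(i : ℕ) + m, h⟩ j else 0 := by
  induction m with
  | zero => ext i j; simp [Fin.ext_iff]
  | succ m ih =>
    rw [pow_succ', mul_assoc, ih, N_mul]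
    ext i j
    simp only [of_apply]
    split_ifs with h1 h2 h3 <;>
      first
        | rfl
        | (exfalso; omega)
        | (congr 1; exact Fin.ext (by simp; omega))


lemma VW (lam : F) : (1 + lam • Nm F k) * Wm F k lam = 1 := by
  rw [add_mul, one_mul, Matrix.smul_mul, N_mul]
  ext i j
  simp only [Matrix.add_apply, Matrix.smul_apply, of_apply, Wm, smul_eq_mul, Matrix.one_apply,
    Fin.val_mk]
  rcases lt_trichotomy ((i : ℕ)) ((j : ℕ)) with h | h | h
  · rw [if_pos (le_of_lt h), dif_pos (by omega), if_pos (by omega), if_neg (Fin.ne_of_val_ne (by omega))]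
    have h1 : (j : ℕ) - (i : ℕ) = ((j : ℕ) - ((i : ℕ) + 1)) + 1 := by omega
    rw [h1, pow_succ]
    ring
  · rw [if_pos (le_of_eq h), if_pos (Fin.ext h), Nat.sub_eq_zero_of_le (le_of_eq h.symm), pow_zero]
    split_ifs <;> first | (exfalso; omega) | ring
  · rw [if_neg (by omega), if_neg (Fin.ne_of_val_ne (by omega))]
    split_ifs <;> first | (exfalso; omega) | ring

lemma WV (lam : F) : Wm F k lam * (1 + lam • Nm F k) = 1 := by
  rw [mul_add, mul_one, Matrix.mul_smul, mul_N]
  ext i j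
  simp only [Matrix.add_apply, Matrix.smul_apply, of_apply, Wm, smul_eq_mul, Matrix.one_apply,
    Fin.val_mk]
  rcases lt_trichotomy ((i : ℕ)) ((j : ℕ)) with h | h | h
  · rw [if_pos (le_of_lt h), dif_pos (by omega), if_pos (by omega), if_neg (Fin.ne_of_val_ne (by omega))]
    have h1 : (j : ℕ) - (i : ℕ) = ((j : ℕ) - 1 - (i : ℕ)) + 1 := by omega
    rw [h1, pow_succ]
    ring
  · rw [if_pos (le_of_eq h), if_pos (Fin.ext h), Nat.sub_eq_zero_of_le (le_of_eq h.symm), pow_zero]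
    split_ifs <;> first | (exfalso; omega) | ring
  · rw [if_neg (by omega), if_neg (Fin.ne_of_val_ne (by omega))]
    split_ifs <;> first | (exfalso; omega) | ring

lemma NW_comm (lam : F) : Nm F k * Wm F k lam = Wm F k lam * Nm F k := by
  rw [N_mul, mul_N]
  ext i j
  simp only [of_apply, Wm, Fin.val_mk]
  split_ifs with h1 h2 h3 h4 h5 <;> first
    | rfl
    | (exfalso; omega)
    | (congr 1; omega)


variable (hk : 0 < k) (lam : F)

lemma JW_eq : (lam • 1 + Nm F k) * Wm F k lam = Mlam F k lam + lam • 1 := by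
  have h : (lam • (1 : Matrix (Fin k) (Fin k) F)) = lam • ((1 + lam • Nm F k) * Wm F k lam) := by
    rw [VW]
  conv_rhs => rw [h]
  rw [Mlam, add_mul, Matrix.smul_mul, one_mul, add_mul, one_mul, Matrix.smul_mul]
  rw [smul_add, sub_smul, one_smul, smul_smul]
  ring_nf
  abel

lemma Npow_k : (Nm F k) ^ k = 0 := by
  have h := Npow_mul (F := F) (k := k) k 1
  rw [mul_one] at h
  rw [h]
  ext i j
  rw [of_apply, dif_neg (by omega)]
  simp

lemma Mlam_pow (m : ℕ) :
    (Mlam F k lam) ^ m = ((1 - lam ^ 2) ^ m) • ((Nm F k) ^ m * (Wm F k lam) ^ m) := by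
  rw [Mlam, smul_pow, Commute.mul_pow (NW_comm lam)]

lemma Mlam_pow_k : (Mlam F k lam) ^ k = 0 := by
  rw [Mlam_pow, Npow_k, zero_mul, smul_zero]

lemma W_pow_last (m : ℕ) (l : Fin k) :
    ((Wm F k lam) ^ m) ⟨k - 1, by omega⟩ l = if (l : ℕ) = k - 1 then 1 else 0 := by
  induction m with
  | zero =>
    rw [pow_zero, Matrix.one_apply]
    split_ifs <;>
      first
        | rfl
        | (exfalso; simp only [Fin.ext_iff, Fin.val_mk] at *; omega)
  | succ m ih =>
    rw [pow_succ', Matrix.mul_apply]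
    rw [Finset.sum_eq_single (⟨k - 1, by omega⟩ : Fin k)]
    · rw [ih]
      have : Wm F k lam ⟨k - 1, by omega⟩ ⟨k - 1, by omega⟩ = 1 := by
        simp [Wm]
      rw [this, one_mul]
    · intro b _ hb
      have hb' : (b : ℕ) ≠ k - 1 := by
        intro hc
        exact hb (Fin.ext (by simp only [Fin.val_mk]; omega))
      have : Wm F k lam ⟨k - 1, by omega⟩ b = 0 := by
        rw [Wm, of_apply, if_neg]
        simp only [Fin.val_mk]
        have := b.isLt
        omega
      rw [this, zero_mul]
    · simp

lemma Q_entry (i j : Fin k) :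
    Qm F k hk lam i j = if h : (i : ℕ) + (k - 1 - (j : ℕ)) < k then
      ((1 - lam ^ 2) ^ (k - 1 - (j : ℕ))) *
        ((Wm F k lam) ^ (k - 1 - (j : ℕ))) ⟨(i : ℕ) + (k - 1 - (j : ℕ)), h⟩ ⟨k - 1, by omega⟩
      else 0 := by
  rw [Qm, of_apply, Mlam_pow, Matrix.smul_apply, Npow_mul, of_apply, smul_eq_mul]
  split_ifs with h
  · rfl
  · rw [mul_zero]

lemma Q_tri : BlockTriangular (Qm F k hk lam) id := by
  intro i j hij
  rw [Q_entry, dif_neg]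
  simp only [id] at hij
  have : (j : ℕ) < (i : ℕ) := hij
  omega

lemma Q_diag (i : Fin k) : Qm F k hk lam i i = (1 - lam ^ 2) ^ (k - 1 - (i : ℕ)) := by
  rw [Q_entry, dif_pos (by omega)]
  have h1 : (⟨(i : ℕ) + (k - 1 - (i : ℕ)), by omega⟩ : Fin k) = ⟨k - 1, by omega⟩ := by
    apply Fin.ext; simp only [Fin.val_mk]; omega
  rw [h1, W_pow_last hk lam, if_pos rfl, mul_one]

lemma Q_det_unit (hc : 1 - lam ^ 2 ≠ 0) : IsUnit (Qm F k hk lam).det := by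
  rw [Matrix.det_of_upperTriangular (Q_tri hk lam)]
  rw [isUnit_iff_ne_zero]
  apply Finset.prod_ne_zero_iff.mpr
  intro i _
  rw [Q_diag]
  exact pow_ne_zero _ hc

lemma MQ_eq : Mlam F k lam * Qm F k hk lam = Qm F k hk lam * Nm F k := by
  rw [mul_N]
  ext i j
  have hL : (Mlam F k lam * Qm F k hk lam) i j
      = ((Mlam F k lam) ^ (k - 1 - (j : ℕ) + 1)) i ⟨k - 1, by omega⟩ := by
    rw [pow_succ', Matrix.mul_apply, Matrix.mul_apply]
    rfl
  rw [hL, of_apply]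
  split_ifs with h
  · rw [Qm, of_apply]
    have hidx : k - 1 - ((⟨(j : ℕ) - 1, by omega⟩ : Fin k) : ℕ) = k - 1 - (j : ℕ) + 1 := by
      simp only [Fin.val_mk]
      omega
    rw [hidx]
  · have h0 : (j : ℕ) = 0 := by omega
    have : k - 1 - (j : ℕ) + 1 = k := by omega
    rw [this, Mlam_pow_k]
    rfl

theorem core (hk : 0 < k) (lam : F) (hc : 1 - lam ^ 2 ≠ 0) :
    ∃ R2 S1 R2i S1i : Matrix (Fin k) (Fin k) F,
      R2 * R2i = 1 ∧ R2i * R2 = 1 ∧ S1 * S1i = 1 ∧ S1i * S1 = 1 ∧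
      R2 * (1 + lam • Nm F k) * S1 = 1 ∧
      R2 * (lam • 1 + Nm F k) * S1 = lam • 1 + Nm F k := by
  have hdet := Q_det_unit hk lam hc
  have hQQi : Qm F k hk lam * (Qm F k hk lam)⁻¹ = 1 := Matrix.mul_nonsing_inv _ hdet
  have hQiQ : (Qm F k hk lam)⁻¹ * Qm F k hk lam = 1 := Matrix.nonsing_inv_mul _ hdet
  refine ⟨(Qm F k hk lam)⁻¹, Wm F k lam * Qm F k hk lam, Qm F k hk lam,
    (Qm F k hk lam)⁻¹ * (1 + lam • Nm F k), hQiQ, hQQi, ?_, ?_, ?_, ?_⟩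
  · rw [mul_assoc, ← mul_assoc (Qm F k hk lam), hQQi, one_mul, WV]
  · rw [mul_assoc, ← mul_assoc (1 + lam • Nm F k), VW, one_mul, hQiQ]
  · rw [mul_assoc, ← mul_assoc (1 + lam • Nm F k), VW, one_mul, hQiQ]
  · rw [mul_assoc, ← mul_assoc (lam • 1 + Nm F k), JW_eq, add_mul, MQ_eq hk lam,
      Matrix.smul_mul, one_mul]
    have hQN : Qm F k hk lam * Nm F k + lam • Qm F k hk lam
        = Qm F k hk lam * (lam • 1 + Nm F k) := by
      rw [mul_add, Matrix.mul_smul, mul_one, add_comm]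
    rw [hQN, ← mul_assoc, hQiQ, one_mul]

def Tau (F : Type*) [Field F] (k : ℕ) : Matrix (Fin k) (Fin k) F :=
  of fun i j => if j = i.rev then 1 else 0

lemma tau_mul (Z : Matrix (Fin k) (Fin k) F) :
    Tau F k * Z = of fun i j => Z i.rev j := by
  ext i j
  rw [Matrix.mul_apply, of_apply]
  rw [Finset.sum_eq_single i.rev]
  · rw [Tau, of_apply, if_pos rfl, one_mul]
  · intro b _ hb
    rw [Tau, of_apply, if_neg hb, zero_mul]
  · simp

lemma mul_tau (Z : Matrix (Fin k) (Fin k) F) :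
    Z * Tau F k = of fun i j => Z i j.rev := by
  ext i j
  rw [Matrix.mul_apply, of_apply]
  rw [Finset.sum_eq_single j.rev]
  · rw [Tau, of_apply, if_pos (Fin.rev_rev j).symm, mul_one]
  · intro b _ hb
    rw [Tau, of_apply, if_neg, mul_zero]
    intro h
    exact hb (by rw [h, Fin.rev_rev])
  · simp

lemma tau_tau : Tau F k * Tau F k = 1 := by
  rw [tau_mul]
  ext i j
  rw [of_apply, Tau, of_apply, Matrix.one_apply]
  simp [Fin.rev_rev, eq_comm]

lemma tau_Nt_tau : Tau F k * (Nm F k)ᵀ * Tau F k = Nm F k := by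
  rw [tau_mul, mul_tau]
  ext i j
  simp only [of_apply, Matrix.transpose_apply, Nm, Fin.val_rev]
  have hi := i.isLt
  have hj := j.isLt
  split_ifs <;> first | rfl | (exfalso; omega)

theorem core' (hk : 0 < k) (lam : F) (hc : 1 - lam ^ 2 ≠ 0) :
    ∃ R1 S2 R1i S2i : Matrix (Fin k) (Fin k) F,
      R1 * R1i = 1 ∧ R1i * R1 = 1 ∧ S2 * S2i = 1 ∧ S2i * S2 = 1 ∧
      R1 * (1 + lam • (Nm F k)ᵀ) * S2 = 1 ∧
      R1 * (lam • 1 + (Nm F k)ᵀ) * S2 = lam • 1 + Nm F k := by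
  obtain ⟨R2, S1, R2i, S1i, h1, h2, h3, h4, h5, h6⟩ := core hk lam hc
  have htt : Tau F k * Tau F k = (1 : Matrix (Fin k) (Fin k) F) := tau_tau
  have h5t : S1ᵀ * (1 + lam • (Nm F k)ᵀ) * R2ᵀ = 1 := by
    have : S1ᵀ * (1 + lam • (Nm F k)ᵀ) * R2ᵀ = (R2 * (1 + lam • Nm F k) * S1)ᵀ := by
      simp [Matrix.transpose_mul, Matrix.transpose_add, Matrix.transpose_smul, mul_assoc]
    rw [this, h5, Matrix.transpose_one]
  have h6t : S1ᵀ * (lam • 1 + (Nm F k)ᵀ) * R2ᵀ = lam • 1 + (Nm F k)ᵀ := by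
    have : S1ᵀ * (lam • 1 + (Nm F k)ᵀ) * R2ᵀ = (R2 * (lam • 1 + Nm F k) * S1)ᵀ := by
      simp [Matrix.transpose_mul, Matrix.transpose_add, Matrix.transpose_smul, mul_assoc]
    rw [this, h6]
    simp [Matrix.transpose_add, Matrix.transpose_smul]
  refine ⟨Tau F k * S1ᵀ, R2ᵀ * Tau F k, S1iᵀ * Tau F k, Tau F k * R2iᵀ, ?_, ?_, ?_, ?_, ?_, ?_⟩
  · have hr : Tau F k * S1ᵀ * (S1iᵀ * Tau F k) = Tau F k * ((S1i * S1)ᵀ * Tau F k) := by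
      rw [Matrix.transpose_mul]
      simp only [mul_assoc]
    rw [hr, h4, Matrix.transpose_one, one_mul, htt]
  · have hr : S1iᵀ * Tau F k * (Tau F k * S1ᵀ) = S1iᵀ * (Tau F k * Tau F k) * S1ᵀ := by
      simp only [mul_assoc]
    rw [hr, htt, mul_one, ← Matrix.transpose_mul, h3, Matrix.transpose_one]
  · have hr : R2ᵀ * Tau F k * (Tau F k * R2iᵀ) = R2ᵀ * (Tau F k * Tau F k) * R2iᵀ := by
      simp only [mul_assoc]
    rw [hr, htt, mul_one, ← Matrix.transpose_mul, h2, Matrix.transpose_one]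
  · have hr : Tau F k * R2iᵀ * (R2ᵀ * Tau F k) = Tau F k * ((R2 * R2i)ᵀ * Tau F k) := by
      rw [Matrix.transpose_mul]
      simp only [mul_assoc]
    rw [hr, h1, Matrix.transpose_one, one_mul, htt]
  · have hr : Tau F k * S1ᵀ * (1 + lam • (Nm F k)ᵀ) * (R2ᵀ * Tau F k)
        = Tau F k * (S1ᵀ * (1 + lam • (Nm F k)ᵀ) * R2ᵀ * Tau F k) := by
      simp only [mul_assoc]
    rw [hr, h5t, one_mul, htt]
  · have hr : Tau F k * S1ᵀ * (lam • 1 + (Nm F k)ᵀ) * (R2ᵀ * Tau F k)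
        = Tau F k * (S1ᵀ * (lam • 1 + (Nm F k)ᵀ) * R2ᵀ) * Tau F k := by
      simp only [mul_assoc]
    rw [hr, h6t, mul_add, Matrix.mul_smul, mul_one, add_mul, Matrix.smul_mul, htt, tau_Nt_tau]

end Stmt10
namespace Stmt10
variable {F : Type*} [Field F]

def pe (k : ℕ) : Fin k ⊕ Fin k ≃ Fin (2 * k) where
  toFun := Sum.elim (fun a => ⟨2 * (a : ℕ), by omega⟩) (fun a => ⟨2 * (a : ℕ) + 1, by omega⟩)
  invFun := fun i => if h : (i : ℕ) % 2 = 0 then Sum.inl ⟨(i : ℕ) / 2, by omega⟩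
    else Sum.inr ⟨(i : ℕ) / 2, by omega⟩
  left_inv := by
    rintro (a | a)
    · simp only [Sum.elim_inl]
      simp only [show 2 * (a : ℕ) % 2 = 0 by omega, ↓reduceDIte]
      congr 1
      exact Fin.ext (by simp only [Fin.val_mk]; omega)
    · simp only [Sum.elim_inr]
      simp only [show ¬ (2 * (a : ℕ) + 1) % 2 = 0 by omega, ↓reduceDIte]
      congr 1
      exact Fin.ext (by simp only [Fin.val_mk]; omega)
  right_inv := by
    intro i
    dsimp only
    by_cases h : (i : ℕ) % 2 = 0
    · rw [dif_pos h]
      simp only [Sum.elim_inl]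
      exact Fin.ext (by simp only [Fin.val_mk]; omega)
    · rw [dif_neg h]
      simp only [Sum.elim_inr]
      exact Fin.ext (by simp only [Fin.val_mk]; omega)

def oe (k : ℕ) : Fin k ⊕ Fin k ≃ Fin (2 * k) :=
  finSumFinEquiv.trans (finCongr (two_mul k).symm)

lemma pe_inl_val (k : ℕ) (a : Fin k) : ((pe k (Sum.inl a)) : ℕ) = 2 * (a : ℕ) := rfl
lemma pe_inr_val (k : ℕ) (a : Fin k) : ((pe k (Sum.inr a)) : ℕ) = 2 * (a : ℕ) + 1 := rfl
lemma oe_inl_val (k : ℕ) (a : Fin k) : ((oe k (Sum.inl a)) : ℕ) = (a : ℕ) := by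
  simp [oe]
lemma oe_inr_val (k : ℕ) (a : Fin k) : ((oe k (Sum.inr a)) : ℕ) = k + (a : ℕ) := by
  simp [oe]
  omega

lemma A_block (k : ℕ) (lam : F) :
    (Matrix.of fun i j : Fin (2 * k) =>
        if (j : ℕ) = (i : ℕ) + 1 then (1 : F)
        else if (i : ℕ) = (j : ℕ) + 1 then lam else 0).submatrix (pe k) (pe k)
      = fromBlocks 0 (1 + lam • (Nm F k)ᵀ) (lam • 1 + Nm F k) 0 := by
  ext s t
  rcases s with a | a <;> rcases t with b | b <;>
    · have ha := a.isLt
      have hb := b.isLt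
      simp only [submatrix_apply, fromBlocks_apply₁₁, fromBlocks_apply₁₂, fromBlocks_apply₂₁,
        fromBlocks_apply₂₂, of_apply, Matrix.add_apply, Matrix.one_apply, Matrix.smul_apply,
        Matrix.transpose_apply, Nm, Matrix.zero_apply, smul_eq_mul, Fin.ext_iff]
      split_ifs <;> first | (exfalso; simp only [pe_inl_val, pe_inr_val] at *; omega) | ring

lemma B0_block (k : ℕ) (lam : F) :
    (Matrix.of fun i j : Fin (2 * k) =>
        if (i : ℕ) < k ∧ (j : ℕ) < k then
          (if i = j then lam else if (j : ℕ) = (i : ℕ) + 1 then (1 : F) else 0)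
        else if k ≤ (i : ℕ) ∧ k ≤ (j : ℕ) then (if i = j then 1 else 0) else 0).submatrix
          (oe k) (oe k)
      = fromBlocks (lam • 1 + Nm F k) 0 0 1 := by
  ext s t
  rcases s with a | a <;> rcases t with b | b <;>
    · have ha := a.isLt
      have hb := b.isLt
      simp only [submatrix_apply, fromBlocks_apply₁₁, fromBlocks_apply₁₂, fromBlocks_apply₂₁,
        fromBlocks_apply₂₂, of_apply, Matrix.add_apply, Matrix.one_apply, Matrix.smul_apply,
        Nm, Matrix.zero_apply, smul_eq_mul, Fin.ext_iff, oe_inl_val, oe_inr_val]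
      split_ifs <;> first | (exfalso; omega) | ring

lemma B1_block (k : ℕ) (lam : F) :
    (Matrix.of fun i j : Fin (2 * k) =>
        if (i : ℕ) < k ∧ (j : ℕ) < k then (if i = j then (1 : F) else 0)
        else if k ≤ (i : ℕ) ∧ k ≤ (j : ℕ) then
          (if i = j then lam else if (j : ℕ) = (i : ℕ) + 1 then 1 else 0)
        else 0).submatrix (oe k) (oe k)
      = fromBlocks 1 0 0 (lam • 1 + Nm F k) := by
  ext s t
  rcases s with a | a <;> rcases t with b | b <;>
    · have ha := a.isLt
      have hb := b.isLt
      simp only [submatrix_apply, fromBlocks_apply₁₁, fromBlocks_apply₁₂, fromBlocks_apply₂₁,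
        fromBlocks_apply₂₂, of_apply, Matrix.add_apply, Matrix.one_apply, Matrix.smul_apply,
        Nm, Matrix.zero_apply, smul_eq_mul, Fin.ext_iff, oe_inl_val, oe_inr_val]
      split_ifs <;> first | (exfalso; omega) | ring

end Stmt10

open Stmt10 in
/-- For the `2k×2k` tridiagonal matrix `A` with zero diagonal, superdiagonal `1`
and subdiagonal `λ` (with `λ ≠ ±1`), the pair `(Aᵀ, A)` is equivalent to
`(J_k(λ), I_k) ⊕ (I_k, J_k(λ))`. -/
theorem stmt_10 (F : Type*) [Field F] [IsAlgClosed F] (hchar : ringChar F ≠ 2)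
    (k : ℕ) (hk : 0 < k) (lam : F) (h1 : lam ≠ 1) (h2 : lam ≠ -1) :
    PairEquiv
      (Matrix.of fun i j : Fin (2 * k) =>
        if (j : ℕ) = (i : ℕ) + 1 then (1 : F)
        else if (i : ℕ) = (j : ℕ) + 1 then lam else 0)ᵀ
      (Matrix.of fun i j : Fin (2 * k) =>
        if (j : ℕ) = (i : ℕ) + 1 then (1 : F)
        else if (i : ℕ) = (j : ℕ) + 1 then lam else 0)
      -- J_k(λ) ⊕ I_k
      (Matrix.of fun i j : Fin (2 * k) =>
        if (i : ℕ) < k ∧ (j : ℕ) < k then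
          (if i = j then lam else if (j : ℕ) = (i : ℕ) + 1 then 1 else 0)
        else if k ≤ (i : ℕ) ∧ k ≤ (j : ℕ) then (if i = j then 1 else 0) else 0)
      -- I_k ⊕ J_k(λ)
      (Matrix.of fun i j : Fin (2 * k) =>
        if (i : ℕ) < k ∧ (j : ℕ) < k then (if i = j then 1 else 0)
        else if k ≤ (i : ℕ) ∧ k ≤ (j : ℕ) then
          (if i = j then lam else if (j : ℕ) = (i : ℕ) + 1 then 1 else 0)
        else 0) := by
  have hc : 1 - lam ^ 2 ≠ 0 := by
    intro h
    have h' : (1 - lam) * (1 + lam) = 0 := by linear_combination h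
    rcases mul_eq_zero.mp h' with h'' | h''
    · exact h1 (eq_of_sub_eq_zero h'').symm
    · exact h2 (eq_neg_of_add_eq_zero_right h'')
  obtain ⟨R2, S1, R2i, S1i, hR2a, hR2b, hS1a, hS1b, hE1, hE2⟩ := Stmt10.core hk lam hc
  obtain ⟨R1, S2, R1i, S2i, hR1a, hR1b, hS2a, hS2b, hE3, hE4⟩ := Stmt10.core' hk lam hc
  have hA : (Matrix.of fun i j : Fin (2 * k) =>
        if (j : ℕ) = (i : ℕ) + 1 then (1 : F)
        else if (i : ℕ) = (j : ℕ) + 1 then lam else 0)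
      = (fromBlocks 0 (1 + lam • (Nm F k)ᵀ) (lam • 1 + Nm F k) 0).submatrix
          ⇑(pe k).symm ⇑(pe k).symm := by
    rw [← A_block k lam, submatrix_submatrix, Equiv.self_comp_symm, submatrix_id_id]
  refine ⟨(fromBlocks R1 0 0 R2).submatrix ⇑(oe k).symm ⇑(pe k).symm,
          (fromBlocks 0 S1 S2 0).submatrix ⇑(pe k).symm ⇑(oe k).symm, ?_, ?_, ?_, ?_⟩
  · rw [Matrix.isUnit_iff_isUnit_det]
    have hmul : (fromBlocks R1 0 0 R2).submatrix ⇑(oe k).symm ⇑(pe k).symm *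
        (fromBlocks R1i 0 0 R2i).submatrix ⇑(pe k).symm ⇑(oe k).symm = 1 := by
      rw [Matrix.submatrix_mul_equiv (fromBlocks R1 0 0 R2) (fromBlocks R1i 0 0 R2i)
        _ (pe k).symm _]
      have hb : fromBlocks R1 0 0 R2 * fromBlocks R1i 0 0 R2i
          = (1 : Matrix (Fin k ⊕ Fin k) (Fin k ⊕ Fin k) F) := by
        rw [fromBlocks_multiply]
        simp only [mul_zero, zero_mul, add_zero, zero_add, hR1a, hR2a]
        exact fromBlocks_one
      rw [hb, submatrix_one_equiv]
    have hd := congrArg Matrix.det hmul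
    rw [Matrix.det_mul, Matrix.det_one] at hd
    exact IsUnit.of_mul_eq_one _ hd
  · rw [Matrix.isUnit_iff_isUnit_det]
    have hmul : (fromBlocks 0 S1 S2 0).submatrix ⇑(pe k).symm ⇑(oe k).symm *
        (fromBlocks 0 S2i S1i 0).submatrix ⇑(oe k).symm ⇑(pe k).symm = 1 := by
      rw [Matrix.submatrix_mul_equiv (fromBlocks 0 S1 S2 0) (fromBlocks 0 S2i S1i 0)
        _ (oe k).symm _]
      have hb : fromBlocks 0 S1 S2 0 * fromBlocks 0 S2i S1i 0
          = (1 : Matrix (Fin k ⊕ Fin k) (Fin k ⊕ Fin k) F) := by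
        rw [fromBlocks_multiply]
        simp only [mul_zero, zero_mul, add_zero, zero_add, hS1a, hS2a]
        exact fromBlocks_one
      rw [hb, submatrix_one_equiv]
    have hd := congrArg Matrix.det hmul
    rw [Matrix.det_mul, Matrix.det_one] at hd
    exact IsUnit.of_mul_eq_one _ hd
  · -- transpose equation
    have hAT : (Matrix.of fun i j : Fin (2 * k) =>
          if (j : ℕ) = (i : ℕ) + 1 then (1 : F)
          else if (i : ℕ) = (j : ℕ) + 1 then lam else 0)ᵀ
        = (fromBlocks 0 (lam • 1 + (Nm F k)ᵀ) (1 + lam • Nm F k) 0).submatrix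
            ⇑(pe k).symm ⇑(pe k).symm := by
      rw [hA, transpose_submatrix, fromBlocks_transpose]
      simp only [transpose_zero, transpose_add, transpose_smul, transpose_one,
        transpose_transpose]
    rw [hAT, Matrix.submatrix_mul_equiv, Matrix.submatrix_mul_equiv]
    have hB : (Matrix.of fun i j : Fin (2 * k) =>
        if (i : ℕ) < k ∧ (j : ℕ) < k then
          (if i = j then lam else if (j : ℕ) = (i : ℕ) + 1 then (1 : F) else 0)
        else if k ≤ (i : ℕ) ∧ k ≤ (j : ℕ) then (if i = j then 1 else 0) else 0)
        = (fromBlocks (lam • 1 + Nm F k) 0 0 1).submatrix ⇑(oe k).symm ⇑(oe k).symm := by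
      rw [← B0_block k lam, submatrix_submatrix, Equiv.self_comp_symm, submatrix_id_id]
    rw [hB]
    congr 1
    rw [fromBlocks_multiply, fromBlocks_multiply]
    simp only [mul_zero, zero_mul, add_zero, zero_add]
    rw [hE4, hE1]
  · rw [hA, Matrix.submatrix_mul_equiv, Matrix.submatrix_mul_equiv]
    have hB : (Matrix.of fun i j : Fin (2 * k) =>
        if (i : ℕ) < k ∧ (j : ℕ) < k then (if i = j then (1 : F) else 0)
        else if k ≤ (i : ℕ) ∧ k ≤ (j : ℕ) then
          (if i = j then lam else if (j : ℕ) = (i : ℕ) + 1 then 1 else 0)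
        else 0)
        = (fromBlocks 1 0 0 (lam • 1 + Nm F k)).submatrix ⇑(oe k).symm ⇑(oe k).symm := by
      rw [← B1_block k lam, submatrix_submatrix, Equiv.self_comp_symm, submatrix_id_id]
    rw [hB]
    congr 1
    rw [fromBlocks_multiply, fromBlocks_multiply]
    simp only [mul_zero, zero_mul, add_zero, zero_add]
    rw [hE3, hE2]
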